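/- The function f(t) = tan(t)/(2·ln(cos t))² is convex on (0, π/2). -/

import Mathlib

open Real

lemma key_ineq (u : ℝ) (hu : 0 ≤ u) : 3 ≤ Real.exp (2*u) * (u^2 - 3*u + 3) := by
  have h := Real.sum_le_exp_of_nonneg (by linarith : (0:ℝ) ≤ 2*u) 5
  simp [Finset.sum_range_succ, Nat.factorial] at h
  have hq : (0:ℝ) < u^2 - 3*u + 3 := by nlinarith [sq_nonneg (u - 3/2)]
  nlinarith [mul_le_mul_of_nonneg_right h hq.le, mul_nonneg (mul_nonneg hu hu) (sq_nonneg (u - 1)),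
    mul_nonneg (mul_nonneg (mul_nonneg hu hu) (mul_nonneg hu hu)) (sq_nonneg (u-1)),
    mul_nonneg (mul_nonneg hu hu) (mul_nonneg hu hu), sq_nonneg u]

lemma hL_deriv {x : ℝ} (hc : 0 < Real.cos x) :
    HasDerivAt (fun t => Real.log (Real.cos t)) (-Real.tan x) x := by
  have h := (Real.hasDerivAt_log hc.ne').comp x (Real.hasDerivAt_cos x)
  refine h.congr_deriv ?_
  symm
  rw [Real.tan_eq_sin_div_cos]
  field_simp

theorem stmt_12 :
    ConvexOn ℝ (Set.Ioo 0 (π/2))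
      (fun t : ℝ => Real.tan t / (2 * Real.log (Real.cos t))^2) := by
  set G : ℝ → ℝ := fun t =>
    (1 + Real.tan t^2)/(4 * Real.log (Real.cos t)^2) + Real.tan t^2 / (2 * Real.log (Real.cos t)^3)
    with hG
  set H : ℝ → ℝ := fun t =>
    Real.tan t*(1+Real.tan t^2)/(2*Real.log (Real.cos t)^2)
    + 3*Real.tan t*(1+Real.tan t^2)/(2*Real.log (Real.cos t)^3)
    + 3*Real.tan t^3/(2*Real.log (Real.cos t)^4) with hH
  have hfacts : ∀ x ∈ Set.Ioo (0:ℝ) (π/2), 0 < Real.cos x ∧ Real.log (Real.cos x) < 0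
      ∧ 0 < Real.tan x := by
    rintro x ⟨hx0, hx1⟩
    have hc : 0 < Real.cos x := Real.cos_pos_of_mem_Ioo ⟨by linarith, hx1⟩
    have hc1 : Real.cos x < 1 := by
      have := Real.cos_lt_cos_of_nonneg_of_le_pi (le_refl 0) (by linarith [Real.pi_pos]) hx0
      simpa using this
    exact ⟨hc, Real.log_neg hc hc1, Real.tan_pos_of_pos_of_lt_pi_div_two hx0 hx1⟩
  have hint : interior (Set.Ioo (0:ℝ) (π/2)) = Set.Ioo 0 (π/2) := interior_Ioo
  -- first derivative
  have hderiv1 : ∀ x ∈ Set.Ioo (0:ℝ) (π/2),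
      HasDerivAt (fun t : ℝ => Real.tan t / (2 * Real.log (Real.cos t))^2) (G x) x := by
    intro x hx
    obtain ⟨hc, hL, hT⟩ := hfacts x hx
    have hLne : Real.log (Real.cos x) ≠ 0 := hL.ne
    have htan : HasDerivAt Real.tan (1 / Real.cos x ^ 2) x := Real.hasDerivAt_tan hc.ne'
    have hL' := hL_deriv hc
    have hden : HasDerivAt (fun t => (2 * Real.log (Real.cos t))^2)
        (2 * (2 * Real.log (Real.cos x))^1 * (2 * (-Real.tan x))) x :=
      (hL'.const_mul 2).pow 2
    have hne : (2 * Real.log (Real.cos x))^2 ≠ 0 := by positivity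
    have h := htan.div hden hne
    refine h.congr_deriv ?_
    symm
    have hid : (1:ℝ) / Real.cos x ^ 2 = 1 + Real.tan x ^ 2 := by
      rw [one_div, ← Real.inv_one_add_tan_sq hc.ne', inv_inv]
    rw [hG]
    simp only
    rw [hid]
    field_simp
    ring
  -- second derivative
  have hderiv2 : ∀ x ∈ Set.Ioo (0:ℝ) (π/2), HasDerivAt G (H x) x := by
    intro x hx
    obtain ⟨hc, hL, hT⟩ := hfacts x hx
    have hLne : Real.log (Real.cos x) ≠ 0 := hL.ne
    have htan : HasDerivAt Real.tan (1 / Real.cos x ^ 2) x := Real.hasDerivAt_tan hc.ne'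
    have hL' := hL_deriv hc
    have hnum1 : HasDerivAt (fun t => 1 + Real.tan t^2)
        (2 * Real.tan x ^ 1 * (1 / Real.cos x ^ 2)) x := (htan.pow 2).const_add 1
    have hden1 : HasDerivAt (fun t => 4 * Real.log (Real.cos t)^2)
        (4 * (2 * Real.log (Real.cos x) ^ 1 * (-Real.tan x))) x := (hL'.pow 2).const_mul 4
    have hne1 : 4 * Real.log (Real.cos x)^2 ≠ 0 := by positivity
    have hnum2 : HasDerivAt (fun t => Real.tan t ^ 2)
        (2 * Real.tan x ^ 1 * (1 / Real.cos x ^ 2)) x := htan.pow 2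
    have hden2 : HasDerivAt (fun t => 2 * Real.log (Real.cos t)^3)
        (2 * (3 * Real.log (Real.cos x) ^ 2 * (-Real.tan x))) x := (hL'.pow 3).const_mul 2
    have hne2 : 2 * Real.log (Real.cos x)^3 ≠ 0 :=
      mul_ne_zero two_ne_zero (pow_ne_zero 3 hLne)
    have h := (hnum1.div hden1 hne1).add (hnum2.div hden2 hne2)
    refine h.congr_deriv ?_
    symm
    have hid : (1:ℝ) / Real.cos x ^ 2 = 1 + Real.tan x ^ 2 := by
      rw [one_div, ← Real.inv_one_add_tan_sq hc.ne', inv_inv]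
    rw [hH]
    simp only
    rw [hid]
    field_simp
    ring
  -- assemble
  refine convexOn_of_hasDerivWithinAt2_nonneg (f' := G) (f'' := H) (convex_Ioo _ _)
    (fun x hx => ((hderiv1 x hx).continuousAt).continuousWithinAt) ?_ ?_ ?_
  · intro x hx
    rw [hint] at hx ⊢
    exact (hderiv1 x hx).hasDerivWithinAt
  · intro x hx
    rw [hint] at hx ⊢
    exact (hderiv2 x hx).hasDerivWithinAt
  · intro x hx
    rw [hint] at hx
    obtain ⟨hc, hL, hT⟩ := hfacts x hx
    have hLne : Real.log (Real.cos x) ≠ 0 := hL.ne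
    have hS : Real.exp (2 * -Real.log (Real.cos x)) = 1 + Real.tan x ^ 2 := by
      rw [show 2 * -Real.log (Real.cos x) = -(Real.log (Real.cos x ^ 2)) by
        rw [Real.log_pow]; push_cast; ring]
      rw [Real.exp_neg, Real.exp_log (by positivity), ← Real.inv_one_add_tan_sq hc.ne', inv_inv]
    have hkey := key_ineq (-Real.log (Real.cos x)) (by linarith)
    rw [hS] at hkey
    have hHeq : H x = Real.tan x * ((1 + Real.tan x^2) *
        (Real.log (Real.cos x)^2 + 3*Real.log (Real.cos x) + 3) - 3)
        / (2 * Real.log (Real.cos x)^4) := by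
      rw [hH]
      simp only
      field_simp
      ring
    rw [hHeq]
    apply div_nonneg _ (by positivity)
    apply mul_nonneg hT.le
    nlinarith [hkey]
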